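/- Every polyomino of size n ≥ 2 that is hole-free and corner compatible contains a unit square whose removal yields a polyomino of size n-1 that is also hole-free and corner compatible. -/

import Mathlib

/-- The grid graph on `ℤ²`: two cells are adjacent when they share an edge. -/
def GZ : SimpleGraph (ℤ × ℤ) where
  Adj u v := |u.1 - v.1| + |u.2 - v.2| = 1
  symm := by
    constructor
    intro u v h
    rw [abs_sub_comm u.1, abs_sub_comm u.2] at h
    exact h
  loopless := by
    constructor
    intro u h
    simp at h

/-- A polyomino: a finite, nonempty, edge-connected set of cells of `ℤ²`. -/
def IsPolyomino (P : Finset (ℤ × ℤ)) : Prop :=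
  P.Nonempty ∧ (GZ.induce {z : ℤ × ℤ | z ∈ P}).Connected

/-- `P` is hole-free: every connected component of the complement of `P` is
infinite. -/
def HoleFree (P : Finset (ℤ × ℤ)) : Prop :=
  ∀ v : ℤ × ℤ, ∀ hv : v ∉ P,
    {u : ℤ × ℤ | ∃ hu : u ∉ P,
      (GZ.induce {z : ℤ × ℤ | z ∉ P}).Reachable ⟨v, hv⟩ ⟨u, hu⟩}.Infinite

/-- `Q` is an isometric copy of `P` (rotations, reflections and translations). -/
def IsoCopy (P Q : Finset (ℤ × ℤ)) : Prop :=
  ∃ (t : ℤ × ℤ) (r : ℕ) (s : Bool),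
    Q = P.image (fun p =>
      ((fun q : ℤ × ℤ => (-q.2, q.1))^[r] (if s then (p.1, -p.2) else p)) + t)

/-- The quarter plane with corner `(0,0)`. -/
def Quarter : Set (ℤ × ℤ) := {z | 0 ≤ z.1 ∧ z.2 ≤ 0}

/-- `P` is corner compatible: some isometric copy of `P` can be placed in the
quarter plane covering the corner cell without disconnecting the empty cells. -/
def CornerCompatible (P : Finset (ℤ × ℤ)) : Prop :=
  ∃ Q : Finset (ℤ × ℤ), IsoCopy P Q ∧ (↑Q : Set (ℤ × ℤ)) ⊆ Quarter ∧
    ((0 : ℤ), (0 : ℤ)) ∈ Q ∧ (GZ.induce (Quarter \ ↑Q)).Connected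

/-- Every hole-free corner-compatible polyomino of size at least 2 contains a
cell whose removal yields a hole-free corner-compatible polyomino. -/
lemma gz_adj_iff (u v : ℤ × ℤ) : GZ.Adj u v ↔
    (u.1 = v.1 ∧ (u.2 = v.2 + 1 ∨ v.2 = u.2 + 1)) ∨
    (u.2 = v.2 ∧ (u.1 = v.1 + 1 ∨ v.1 = u.1 + 1)) := by
  change |u.1 - v.1| + |u.2 - v.2| = 1 ↔ _
  rcases abs_cases (u.1 - v.1) with ⟨h1, h1'⟩ | ⟨h1, h1'⟩ <;>
    rcases abs_cases (u.2 - v.2) with ⟨h2, h2'⟩ | ⟨h2, h2'⟩ <;>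
      rw [h1, h2] <;> omega

/-- A chain of length `n` inside `S` from `a` to `b`. -/
inductive Chain (S : Set (ℤ × ℤ)) : (ℤ × ℤ) → (ℤ × ℤ) → ℕ → Prop
  | refl (a : ℤ × ℤ) (h : a ∈ S) : Chain S a a 0
  | cons {a b c : ℤ × ℤ} {n : ℕ} (ha : a ∈ S) (hadj : GZ.Adj a b)
      (htl : Chain S b c n) : Chain S a c (n + 1)

namespace Chain

lemma mem_first {S a b n} (h : Chain S a b n) : a ∈ S := by
  cases h with
  | refl _ h => exact h
  | cons ha _ _ => exact ha

lemma mem_last {S a b n} (h : Chain S a b n) : b ∈ S := by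
  induction h with
  | refl _ h => exact h
  | cons _ _ _ ih => exact ih

lemma mono {S T : Set (ℤ × ℤ)} (hST : S ⊆ T) {a b n} (h : Chain S a b n) :
    Chain T a b n := by
  induction h with
  | refl a h => exact .refl a (hST h)
  | cons ha hadj _ ih => exact .cons (hST ha) hadj ih

lemma append {S a b c m n} (h1 : Chain S a b m) (h2 : Chain S b c n) :
    Chain S a c (m + n) := by
  induction h1 with
  | refl => simpa using h2
  | cons ha hadj _ ih =>
      have := Chain.cons ha hadj (ih h2)
      convert this using 1
      omega

lemma symm {S a b n} (h : Chain S a b n) : Chain S b a n := by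
  induction h with
  | refl a h => exact .refl a h
  | @cons a b c n ha hadj htl ih =>
      have hb : b ∈ S := htl.mem_first
      have h1 : Chain S b a 1 := .cons hb hadj.symm (.refl _ ha)
      have := ih.append h1
      simpa [Nat.add_comm] using this

lemma eq_of_zero {S a b} (h : Chain S a b 0) : a = b := by
  cases h; rfl

/-- Split a chain at a vertex `c`, or avoid it entirely. -/
lemma split {S : Set (ℤ × ℤ)} (c : ℤ × ℤ) {a b n} (h : Chain S a b n) :
    Chain (S \ {c}) a b n ∨
      ∃ k m, k + m = n ∧ Chain S a c k ∧ Chain S c b m := by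
  induction h with
  | refl a h =>
      by_cases hac : a = c
      · exact Or.inr ⟨0, 0, rfl, hac ▸ .refl a h, hac ▸ .refl a h⟩
      · exact Or.inl (.refl a ⟨h, hac⟩)
  | @cons a b' c' n ha hadj htl ih =>
      by_cases hac : a = c
      · exact Or.inr ⟨0, n + 1, by omega, hac ▸ .refl a ha,
          hac ▸ .cons ha hadj htl⟩
      · rcases ih with h1 | ⟨k, m, hkm, hk, hm⟩
        · exact Or.inl (.cons ⟨ha, hac⟩ hadj h1)
        · exact Or.inr ⟨k + 1, m, by omega, .cons ha hadj hk, hm⟩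

end Chain

/-- Reachability in an induced subgraph is the same as chains. -/
lemma induce_reachable_iff {S : Set (ℤ × ℤ)} {a b : ℤ × ℤ} (ha : a ∈ S) (hb : b ∈ S) :
    (GZ.induce S).Reachable ⟨a, ha⟩ ⟨b, hb⟩ ↔ ∃ n, Chain S a b n := by
  constructor
  · rintro ⟨w⟩
    have : ∀ (u v : S) (_ : (GZ.induce S).Walk u v), ∃ n, Chain S u.1 v.1 n := by
      intro u v w
      induction w with
      | nil => rename_i u; exact ⟨0, .refl _ u.2⟩
      | @cons x y z h p ih =>
          obtain ⟨n, hn⟩ := ih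
          exact ⟨n + 1, .cons x.2 h hn⟩
    exact this _ _ w
  · rintro ⟨n, hc⟩
    induction hc with
    | refl a h => rfl
    | @cons x y z n hx hadj htl ih =>
        have hy : y ∈ S := htl.mem_first
        have hz : z ∈ S := htl.mem_last
        have h1 : (GZ.induce S).Adj ⟨x, hx⟩ ⟨y, hy⟩ := hadj
        exact (h1.reachable).trans (ih hy hz)

lemma induce_connected_iff (S : Set (ℤ × ℤ)) :
    (GZ.induce S).Connected ↔ S.Nonempty ∧ ∀ a ∈ S, ∀ b ∈ S, ∃ n, Chain S a b n := by
  constructor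
  · intro hc
    obtain ⟨⟨x, hx⟩⟩ := hc.nonempty
    refine ⟨⟨x, hx⟩, fun a ha b hb => ?_⟩
    exact (induce_reachable_iff ha hb).1 (hc.preconnected ⟨a, ha⟩ ⟨b, hb⟩)
  · rintro ⟨hne, h⟩
    obtain ⟨x, hx⟩ := hne
    haveI : Nonempty ↑S := ⟨⟨x, hx⟩⟩
    refine SimpleGraph.Connected.mk fun u v => ?_
    obtain ⟨a, ha⟩ := u
    obtain ⟨b, hb⟩ := v
    exact (induce_reachable_iff ha hb).2 (h a ha b hb)


/-- The lexicographically extreme cell: maximal first coordinate, then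
minimal second coordinate. -/
lemma lexmax {C : Finset (ℤ × ℤ)} (hC : C.Nonempty) :
    ∃ u ∈ C, ∀ z ∈ C, z.1 ≤ u.1 ∧ (z.1 = u.1 → u.2 ≤ z.2) := by
  obtain ⟨v, hv, hvmax⟩ := C.exists_max_image (fun p => p.1) hC
  classical
  have hCne : (C.filter (fun p => p.1 = v.1)).Nonempty :=
    ⟨v, Finset.mem_filter.2 ⟨hv, rfl⟩⟩
  obtain ⟨u, hu, humax⟩ := (C.filter (fun p => p.1 = v.1)).exists_max_image
    (fun p => -p.2) hCne
  have hu1 : u.1 = v.1 := (Finset.mem_filter.1 hu).2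
  refine ⟨u, (Finset.mem_filter.1 hu).1, fun z hz => ?_⟩
  constructor
  · exact hu1 ▸ hvmax z hz
  · intro hz1
    have : z ∈ C.filter (fun p => p.1 = v.1) :=
      Finset.mem_filter.2 ⟨hz, by omega⟩
    have := humax z this
    omega

/-- Every cell outside the quarter plane connects to `(-1, 1)` outside. -/
lemma conn_outside (w : ℤ × ℤ) (hw : w ∉ Quarter) :
    ∃ n, Chain {z | z ∉ Quarter} w ((-1 : ℤ), (1 : ℤ)) n := by
  generalize hm : ((w.1 + 1).natAbs + (w.2 - 1).natAbs) = m
  induction m using Nat.strong_induction_on generalizing w with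
  | _ m ih =>
    have hw' : w.1 < 0 ∨ 0 < w.2 := by
      by_contra h
      exact hw ⟨by omega, by omega⟩
    by_cases h0 : w = ((-1 : ℤ), (1 : ℤ))
    · exact h0 ▸ ⟨0, .refl _ hw⟩
    · -- pick a neighbor closer to (-1,1) that is outside the quarter
      have : ∃ w' : ℤ × ℤ, w' ∉ Quarter ∧ GZ.Adj w w' ∧
          (w'.1 + 1).natAbs + (w'.2 - 1).natAbs < m := by
        rcases lt_trichotomy w.1 (-1) with h1 | h1 | h1
        · refine ⟨(w.1 + 1, w.2), fun hq => ?_, ?_, by simp; omega⟩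
          · exact absurd hq.1 (by simp; omega)
          · rw [gz_adj_iff]; right; exact ⟨rfl, Or.inr rfl⟩
        · -- w.1 = -1
          rcases lt_trichotomy w.2 1 with h2 | h2 | h2
          · refine ⟨(w.1, w.2 + 1), fun hq => ?_, ?_, by simp; omega⟩
            · exact absurd hq.1 (by omega)
            · rw [gz_adj_iff]; left; exact ⟨rfl, Or.inr rfl⟩
          · exact absurd (Prod.ext h1 h2) h0
          · refine ⟨(w.1, w.2 - 1), fun hq => ?_, ?_, by simp; omega⟩
            · exact absurd hq.1 (by omega)
            · rw [gz_adj_iff]; left; exact ⟨rfl, Or.inl (by ring)⟩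
        · -- w.1 > -1, so w.2 > 0
          have h2 : 0 < w.2 := by omega
          refine ⟨(w.1 - 1, w.2), fun hq => ?_, ?_, by simp; omega⟩
          · exact absurd hq.2 (by simp; omega)
          · rw [gz_adj_iff]; right; exact ⟨rfl, Or.inl (by ring)⟩
      obtain ⟨w', hw'q, hadj, hlt⟩ := this
      obtain ⟨n, hn⟩ := ih _ (hm ▸ hlt) w' hw'q rfl
      exact ⟨n + 1, .cons hw hadj hn⟩

namespace PolyAux

def rot (q : ℤ × ℤ) : ℤ × ℤ := (-q.2, q.1)
def rotinv (q : ℤ × ℤ) : ℤ × ℤ := (q.2, -q.1)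
def rfl' (s : Bool) (p : ℤ × ℤ) : ℤ × ℤ := if s then (p.1, -p.2) else p

lemma rot_rotinv (q : ℤ × ℤ) : rot (rotinv q) = q := by
  simp [rot, rotinv]

lemma rotinv_rot (q : ℤ × ℤ) : rotinv (rot q) = q := by
  simp [rot, rotinv]

lemma rot_iter_rotinv_iter (r : ℕ) (q : ℤ × ℤ) : rot^[r] (rotinv^[r] q) = q := by
  induction r generalizing q with
  | zero => rfl
  | succ n ih =>
      rw [Function.iterate_succ_apply, Function.iterate_succ_apply']
      rw [rot_rotinv, ih]

lemma rotinv_iter_rot_iter (r : ℕ) (q : ℤ × ℤ) : rotinv^[r] (rot^[r] q) = q := by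
  induction r generalizing q with
  | zero => rfl
  | succ n ih =>
      rw [Function.iterate_succ_apply, Function.iterate_succ_apply']
      rw [rotinv_rot, ih]

lemma rfl'_rfl' (s : Bool) (p : ℤ × ℤ) : rfl' s (rfl' s p) = p := by
  cases s <;> simp [rfl']

lemma adj_rot (u v : ℤ × ℤ) : GZ.Adj (rot u) (rot v) ↔ GZ.Adj u v := by
  show |(-u.2) - (-v.2)| + |u.1 - v.1| = 1 ↔ |u.1 - v.1| + |u.2 - v.2| = 1
  have : -u.2 - -v.2 = -(u.2 - v.2) := by ring
  rw [this, abs_neg, add_comm]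

lemma adj_rot_iter (r : ℕ) (u v : ℤ × ℤ) :
    GZ.Adj (rot^[r] u) (rot^[r] v) ↔ GZ.Adj u v := by
  induction r generalizing u v with
  | zero => rfl
  | succ n ih =>
      rw [Function.iterate_succ_apply', Function.iterate_succ_apply', adj_rot]
      exact ih u v

lemma adj_rfl' (s : Bool) (u v : ℤ × ℤ) :
    GZ.Adj (rfl' s u) (rfl' s v) ↔ GZ.Adj u v := by
  cases s
  · rfl
  · show |u.1 - v.1| + |(-u.2) - (-v.2)| = 1 ↔ |u.1 - v.1| + |u.2 - v.2| = 1
    have : -u.2 - -v.2 = -(u.2 - v.2) := by ring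
    rw [this, abs_neg]

lemma adj_add (t u v : ℤ × ℤ) : GZ.Adj (u + t) (v + t) ↔ GZ.Adj u v := by
  show |(u.1 + t.1) - (v.1 + t.1)| + |(u.2 + t.2) - (v.2 + t.2)| = 1 ↔
    |u.1 - v.1| + |u.2 - v.2| = 1
  have h1 : u.1 + t.1 - (v.1 + t.1) = u.1 - v.1 := by ring
  have h2 : u.2 + t.2 - (v.2 + t.2) = u.2 - v.2 := by ring
  rw [h1, h2]

variable (t : ℤ × ℤ) (r : ℕ) (s : Bool)

def fmap : ℤ × ℤ → ℤ × ℤ := fun p => rot^[r] (rfl' s p) + t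
def gmap : ℤ × ℤ → ℤ × ℤ := fun q => rfl' s (rotinv^[r] (q - t))

lemma fmap_gmap (q : ℤ × ℤ) : fmap t r s (gmap t r s q) = q := by
  simp only [fmap, gmap, rfl'_rfl', rot_iter_rotinv_iter]
  abel

lemma gmap_fmap (p : ℤ × ℤ) : gmap t r s (fmap t r s p) = p := by
  simp only [fmap, gmap, add_sub_cancel_right, rotinv_iter_rot_iter, rfl'_rfl']

lemma fmap_inj : Function.Injective (fmap t r s) :=
  Function.LeftInverse.injective (gmap_fmap t r s)

lemma fmap_bij : Function.Bijective (fmap t r s) :=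
  ⟨fmap_inj t r s, fun q => ⟨gmap t r s q, fmap_gmap t r s q⟩⟩

lemma adj_fmap (u v : ℤ × ℤ) : GZ.Adj (fmap t r s u) (fmap t r s v) ↔ GZ.Adj u v := by
  rw [fmap, fmap, adj_add, adj_rot_iter, adj_rfl']

/-- Forward transfer of chains along `fmap`. -/
lemma chain_fmap {S : Set (ℤ × ℤ)} {a b n} (h : Chain S a b n) :
    Chain (fmap t r s '' S) (fmap t r s a) (fmap t r s b) n := by
  induction h with
  | refl a h => exact .refl _ ⟨a, h, rfl⟩
  | cons ha hadj _ ih =>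
      exact .cons ⟨_, ha, rfl⟩ ((adj_fmap t r s _ _).2 hadj) ih

/-- Backward transfer of chains along `fmap`. -/
lemma chain_fmap_rev {S : Set (ℤ × ℤ)} {x y : ℤ × ℤ} {n : ℕ}
    (h : Chain (fmap t r s '' S) x y n) :
    ∀ a b, fmap t r s a = x → fmap t r s b = y → Chain S a b n := by
  induction h with
  | refl x hx =>
      rintro a b ha hb
      obtain ⟨z, hz, hzx⟩ := hx
      have hab : a = b := fmap_inj t r s (ha.trans hb.symm)
      have haz : a = z := fmap_inj t r s (by rw [ha, hzx])
      exact hab ▸ .refl a (haz ▸ hz)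
  | @cons x y' z n hx hadj htl ih =>
      rintro a b ha hb
      obtain ⟨za, hza, hzax⟩ := hx
      obtain ⟨zm, hzm, hzmy⟩ : y' ∈ fmap t r s '' S := htl.mem_first
      have haz : a = za := fmap_inj t r s (by rw [ha, hzax])
      refine .cons (haz ▸ hza) ?_ (ih zm b hzmy hb)
      have : GZ.Adj (fmap t r s a) (fmap t r s zm) := by rw [ha, hzmy]; exact hadj
      exact (adj_fmap t r s _ _).1 this

end PolyAux

open PolyAux in
lemma main_Q (Q : Finset (ℤ × ℤ)) (hQsub : (↑Q : Set (ℤ × ℤ)) ⊆ Quarter)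
    (h0Q : ((0 : ℤ), (0 : ℤ)) ∈ Q)
    (hRconn : (GZ.induce (Quarter \ ↑Q)).Connected)
    (hQconn : ∀ a ∈ Q, ∀ b ∈ Q, ∃ n, Chain ↑Q a b n)
    (hcard : 2 ≤ Q.card) :
    ∃ c ∈ Q, c ≠ ((0 : ℤ), (0 : ℤ)) ∧
      (∀ a ∈ Q.erase c, ∃ n, Chain ↑(Q.erase c) a ((0 : ℤ), (0 : ℤ)) n) ∧
      (∀ w, w ∉ Q.erase c → ∃ n, Chain {z | z ∉ Q.erase c} w ((-1 : ℤ), (1 : ℤ)) n) ∧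
      (GZ.induce (Quarter \ ↑(Q.erase c))).Connected := by
  classical
  set o : ℤ × ℤ := ((0 : ℤ), (0 : ℤ)) with ho
  have ho1 : o.1 = 0 := by rw [ho]
  have ho2 : o.2 = 0 := by rw [ho]
  have hoQ : o ∈ (↑Q : Set (ℤ × ℤ)) := h0Q
  -- the distance function from the origin inside Q
  set d : ℤ × ℤ → ℕ := fun u => sInf {n | Chain ↑Q o u n} with hd
  have hd_chain : ∀ u ∈ Q, Chain ↑Q o u (d u) := by
    intro u hu
    exact Nat.sInf_mem (hQconn o h0Q u hu)
  have hd_min : ∀ u n, Chain ↑Q o u n → d u ≤ n := fun u n h => Nat.sInf_le h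
  have hdo : d o = 0 := Nat.le_zero.1 (hd_min o 0 (.refl o hoQ))
  -- the boundary cells
  set B : Finset (ℤ × ℤ) :=
    Q.filter (fun w => ∃ v, GZ.Adj w v ∧ v ∈ Quarter ∧ v ∉ Q) with hB
  -- the lexicographically extreme cell of Q is a boundary cell distinct from o
  obtain ⟨u, huQ, humax⟩ := lexmax ⟨o, h0Q⟩
  have huq : u ∈ Quarter := hQsub huQ
  have hue : ((u.1 + 1, u.2) : ℤ × ℤ) ∉ Q := by
    intro h
    have h2 : (((u.1 + 1, u.2) : ℤ × ℤ)).1 ≤ u.1 := (humax _ h).1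
    simp only at h2
    omega
  have huB : u ∈ B := by
    refine Finset.mem_filter.2 ⟨huQ, ⟨(u.1 + 1, u.2), ?_, ⟨?_, ?_⟩, hue⟩⟩
    · rw [gz_adj_iff]; right; exact ⟨rfl, Or.inr rfl⟩
    · simp only [Quarter, Set.mem_setOf_eq] at huq ⊢
      omega
    · exact (hQsub huQ).2
  have huo : u ≠ o := by
    intro h
    obtain ⟨z, hzQ, hzo⟩ : ∃ z ∈ Q, z ≠ o := by
      by_contra hz
      push_neg at hz
      have hsub : Q ⊆ {o} := fun z hzq => Finset.mem_singleton.2 (hz z hzq)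
      have hle := Finset.card_le_card hsub
      rw [Finset.card_singleton] at hle
      omega
    have h1 := humax z hzQ
    have h2 := hQsub hzQ
    simp only [Quarter, Set.mem_setOf_eq] at h2
    rw [h] at h1
    apply hzo
    have hz1 : z.1 = o.1 := by omega
    have hz2 : z.2 = o.2 := by
      have := h1.2 (by omega)
      omega
    exact Prod.ext hz1 hz2
  have hdu : 1 ≤ d u := by
    rcases Nat.eq_zero_or_pos (d u) with h | h
    · have := Chain.eq_of_zero (h ▸ hd_chain u huQ)
      exact absurd this.symm huo
    · exact h
  -- choose the boundary cell with maximal distance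
  obtain ⟨c, hcB, hcmax⟩ := B.exists_max_image d ⟨u, huB⟩
  have hcQ : c ∈ Q := (Finset.mem_filter.1 hcB).1
  obtain ⟨v0, hv0adj, hv0q, hv0Q⟩ := (Finset.mem_filter.1 hcB).2
  have hdc : 1 ≤ d c := le_trans hdu (hcmax u huB)
  have hco : c ≠ o := by
    intro h
    rw [h, hdo] at hdc
    omega
  -- the key connectivity claim
  have key : ∀ a ∈ Q.erase c, ∃ n, Chain ↑(Q.erase c) a o n := by
    intro a ha
    by_contra hno
    push_neg at hno
    set CC : Finset (ℤ × ℤ) :=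
      (Q.erase c).filter (fun w => ∃ n, Chain ↑(Q.erase c) a w n) with hCC
    have haCC : a ∈ CC := Finset.mem_filter.2 ⟨ha, ⟨0, .refl a (Finset.mem_coe.2 ha)⟩⟩
    have hoCC : o ∉ CC := by
      intro h
      obtain ⟨n, hn⟩ := (Finset.mem_filter.1 h).2
      exact (hno n).elim hn
    obtain ⟨w, hwCC, hwmax⟩ := lexmax ⟨a, haCC⟩
    have hwQe : w ∈ Q.erase c := (Finset.mem_filter.1 hwCC).1
    have hwQ : w ∈ Q := Finset.mem_of_mem_erase hwQe
    have hwq : w ∈ Quarter := hQsub hwQ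
    obtain ⟨nw, hnw⟩ := (Finset.mem_filter.1 hwCC).2
    -- closure of the component
    have hclose : ∀ z, GZ.Adj w z → z ∈ Q.erase c → z ∈ CC := by
      intro z hadj hz
      refine Finset.mem_filter.2 ⟨hz, ⟨nw + 1, hnw.append ?_⟩⟩
      exact .cons (Finset.mem_coe.2 hwQe) hadj (.refl z (Finset.mem_coe.2 hz))
    -- the east and south neighbours of the extreme cell
    have henotCC : ((w.1 + 1, w.2) : ℤ × ℤ) ∉ CC := by
      intro h
      have := (hwmax _ h).1
      simp only at this
      omega
    have hsnotCC : ((w.1, w.2 - 1) : ℤ × ℤ) ∉ CC := by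
      intro h
      have := (hwmax _ h).2 (by rfl)
      simp only at this
      omega
    have headj : GZ.Adj w (w.1 + 1, w.2) := by
      rw [gz_adj_iff]; right; exact ⟨rfl, Or.inr rfl⟩
    have hsadj : GZ.Adj w (w.1, w.2 - 1) := by
      rw [gz_adj_iff]; left; exact ⟨rfl, Or.inl (by ring)⟩
    have heQe : ((w.1 + 1, w.2) : ℤ × ℤ) ∉ Q.erase c :=
      fun h => henotCC (hclose _ headj h)
    have hsQe : ((w.1, w.2 - 1) : ℤ × ℤ) ∉ Q.erase c :=
      fun h => hsnotCC (hclose _ hsadj h)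
    -- w is a boundary cell
    have hwB : w ∈ B := by
      have hq1 : ((w.1 + 1, w.2) : ℤ × ℤ) ∈ Quarter := by
        simp only [Quarter, Set.mem_setOf_eq] at hwq ⊢
        omega
      have hq2 : ((w.1, w.2 - 1) : ℤ × ℤ) ∈ Quarter := by
        simp only [Quarter, Set.mem_setOf_eq] at hwq ⊢
        omega
      by_cases he : ((w.1 + 1, w.2) : ℤ × ℤ) ∈ Q
      · by_cases hs : ((w.1, w.2 - 1) : ℤ × ℤ) ∈ Q
        · -- both would have to be c, impossible
          exfalso
          have he2 : ((w.1 + 1, w.2) : ℤ × ℤ) = c := by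
            by_contra hne
            exact heQe (Finset.mem_erase.2 ⟨hne, he⟩)
          have hs2 : ((w.1, w.2 - 1) : ℤ × ℤ) = c := by
            by_contra hne
            exact hsQe (Finset.mem_erase.2 ⟨hne, hs⟩)
          rw [← hs2] at he2
          have := congrArg Prod.snd he2
          simp only at this
          omega
        · exact Finset.mem_filter.2 ⟨hwQ, ⟨_, hsadj, hq2, hs⟩⟩
      · exact Finset.mem_filter.2 ⟨hwQ, ⟨_, headj, hq1, he⟩⟩
    -- the distance contradiction
    have hwc : w ≠ c := (Finset.mem_erase.1 hwQe).1
    rcases (hd_chain w hwQ).split c with h1 | ⟨k, m, hkm, hk, hm⟩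
    · have h1' : Chain ↑(Q.erase c) o w (d w) := by
        rwa [Finset.coe_erase]
      exact (hno (nw + d w)).elim (hnw.append h1'.symm)
    · have hm0 : m ≠ 0 := fun h => hwc (Chain.eq_of_zero (h ▸ hm)).symm
      have h2 : d c ≤ k := hd_min c k hk
      have h3 : d w ≤ d c := hcmax w hwB
      omega
  -- complement facts
  have houtQ : ∀ z : ℤ × ℤ, z ∉ Quarter → z ∉ Q := fun z hz h => hz (hQsub h)
  have houtS : ∀ z : ℤ × ℤ, z ∉ Quarter → z ∈ {z : ℤ × ℤ | z ∉ Q.erase c} :=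
    fun z hz => fun h => houtQ z hz (Finset.mem_of_mem_erase h)
  have hRS : (Quarter \ ↑Q : Set (ℤ × ℤ)) ⊆ {z : ℤ × ℤ | z ∉ Q.erase c} :=
    fun z hz h => hz.2 (Finset.mem_coe.2 (Finset.mem_of_mem_erase h))
  -- every cell of Quarter \ Q connects to (-1, 1) in the complement of Q.erase c
  have hRgood : ∀ v ∈ (Quarter \ ↑Q : Set (ℤ × ℤ)),
      ∃ n, Chain {z : ℤ × ℤ | z ∉ Q.erase c} v ((-1 : ℤ), (1 : ℤ)) n := by
    intro v hv
    obtain ⟨zm, hzmQ, hzmmax⟩ := Q.exists_max_image (fun p => p.1) ⟨o, h0Q⟩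
    set M : ℤ := zm.1 + 1 with hM
    have hMpos : 0 ≤ M := by
      have := (hQsub hzmQ).1
      omega
    have hfarq : ((M, 0) : ℤ × ℤ) ∈ Quarter := ⟨hMpos, le_refl 0⟩
    have hfarQ : ((M, 0) : ℤ × ℤ) ∉ Q := by
      intro h
      have := hzmmax _ h
      simp only at this
      omega
    have hfar : ((M, 0) : ℤ × ℤ) ∈ (Quarter \ ↑Q : Set (ℤ × ℤ)) := ⟨hfarq, hfarQ⟩
    obtain ⟨_, hRc⟩ := (induce_connected_iff _).1 hRconn
    obtain ⟨n1, hn1⟩ := hRc v hv _ hfar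
    have step1 : Chain {z : ℤ × ℤ | z ∉ Q.erase c} v (M, 0) n1 := hn1.mono hRS
    have hup : ((M, 1) : ℤ × ℤ) ∉ Quarter := by
      intro h
      have := h.2
      simp only at this
      omega
    have hadjup : GZ.Adj (M, 0) (M, 1) := by
      rw [gz_adj_iff]; left; exact ⟨rfl, Or.inr rfl⟩
    obtain ⟨n2, hn2⟩ := conn_outside (M, 1) hup
    have step2 : Chain {z : ℤ × ℤ | z ∉ Q.erase c} (M, 0) ((-1 : ℤ), (1 : ℤ)) (n2 + 1) := by
      refine Chain.cons (hRS hfar) hadjup (hn2.mono ?_)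
      intro z hz
      exact houtS z hz
    exact ⟨n1 + (n2 + 1), step1.append step2⟩
  -- main complement connectivity
  have hcomp : ∀ w, w ∉ Q.erase c →
      ∃ n, Chain {z : ℤ × ℤ | z ∉ Q.erase c} w ((-1 : ℤ), (1 : ℤ)) n := by
    intro w hw
    by_cases hwq : w ∈ Quarter
    · by_cases hwQ : w ∈ Q
      · -- w = c
        have hwc : w = c := by
          by_contra hne
          exact hw (Finset.mem_erase.2 ⟨hne, hwQ⟩)
        subst hwc
        obtain ⟨n, hn⟩ := hRgood v0 ⟨hv0q, hv0Q⟩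
        exact ⟨n + 1, .cons hw hv0adj hn⟩
      · exact hRgood w ⟨hwq, hwQ⟩
    · obtain ⟨n, hn⟩ := conn_outside w hwq
      exact ⟨n, hn.mono (fun z hz => houtS z hz)⟩
  -- corner connectivity of Quarter \ (Q.erase c)
  have hcq : c ∈ Quarter := hQsub hcQ
  have hcT : c ∈ (Quarter \ ↑(Q.erase c) : Set (ℤ × ℤ)) :=
    ⟨hcq, fun h => (Finset.mem_erase.1 (Finset.mem_coe.1 h)).1 rfl⟩
  have hRT : (Quarter \ ↑Q : Set (ℤ × ℤ)) ⊆ (Quarter \ ↑(Q.erase c) : Set (ℤ × ℤ)) := by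
    intro z hz
    exact ⟨hz.1, fun h => hz.2 (Finset.mem_coe.2 (Finset.mem_of_mem_erase (Finset.mem_coe.1 h)))⟩
  have hcorner2 : (GZ.induce (Quarter \ ↑(Q.erase c))).Connected := by
    rw [induce_connected_iff]
    refine ⟨⟨c, hcT⟩, fun a ha b hb => ?_⟩
    have hv0T : v0 ∈ (Quarter \ ↑(Q.erase c) : Set (ℤ × ℤ)) := hRT ⟨hv0q, hv0Q⟩
    have hto : ∀ z ∈ (Quarter \ ↑(Q.erase c) : Set (ℤ × ℤ)),
        ∃ n, Chain (Quarter \ ↑(Q.erase c)) z v0 n := by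
      intro z hz
      by_cases hzQ : z ∈ Q
      · have hzc : z = c := by
          by_contra hne
          exact hz.2 (Finset.mem_coe.2 (Finset.mem_erase.2 ⟨hne, hzQ⟩))
        subst hzc
        exact ⟨1, .cons hcT hv0adj (.refl v0 hv0T)⟩
      · obtain ⟨_, hRc⟩ := (induce_connected_iff _).1 hRconn
        obtain ⟨n, hn⟩ := hRc z ⟨hz.1, hzQ⟩ v0 ⟨hv0q, hv0Q⟩
        exact ⟨n, hn.mono hRT⟩
    obtain ⟨n1, hn1⟩ := hto a ha
    obtain ⟨n2, hn2⟩ := hto b hb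
    exact ⟨n1 + n2, hn1.append hn2.symm⟩
  exact ⟨c, hcQ, hco, key, hcomp, hcorner2⟩

lemma chain_vert (k : ℕ) :
    Chain {z : ℤ × ℤ | z ∉ Quarter} ((-1 : ℤ), (1 : ℤ)) ((-1 : ℤ), (k : ℤ) + 1) k := by
  induction k with
  | zero =>
      have h0 : ((-1 : ℤ), ((0 : ℕ) : ℤ) + 1) = ((-1 : ℤ), (1 : ℤ)) := by norm_num
      rw [h0]
      exact .refl _ (fun h => by have := h.1; omega)
  | succ n ih =>
      have hstep : Chain {z : ℤ × ℤ | z ∉ Quarter}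
          ((-1 : ℤ), (n : ℤ) + 1) ((-1 : ℤ), ((n : ℕ) + 1 : ℕ) + 1) 1 := by
        refine .cons (fun h => by have := h.1; omega) ?_
          (.refl _ (fun h => by have := h.1; omega))
        rw [gz_adj_iff]; left
        constructor
        · rfl
        · right; push_cast; ring
      have := ih.append hstep
      simpa using this

theorem polyomino_removable_cell
    (P : Finset (ℤ × ℤ)) (hP : IsPolyomino P) (hhole : HoleFree P)
    (hcorner : CornerCompatible P) (hcard : 2 ≤ P.card) :
    ∃ c ∈ P, IsPolyomino (P.erase c) ∧ HoleFree (P.erase c) ∧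
      CornerCompatible (P.erase c) := by
  classical
  obtain ⟨Q, ⟨t, r, s, hQ⟩, hQsub, h0Q, hRconn⟩ := hcorner
  have hQf : Q = P.image (PolyAux.fmap t r s) := hQ
  set F := PolyAux.fmap t r s with hF
  have hFinj : Function.Injective F := PolyAux.fmap_inj t r s
  have hFbij : Function.Bijective F := PolyAux.fmap_bij t r s
  have hQcoe : (↑Q : Set (ℤ × ℤ)) = F '' ↑P := by rw [hQf, Finset.coe_image]
  have hQcard : 2 ≤ Q.card := by
    rw [hQf, Finset.card_image_of_injective _ hFinj]
    exact hcard
  -- transfer connectivity of P to Q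
  have hPconn := ((induce_connected_iff (↑P : Set (ℤ × ℤ))).1 hP.2).2
  have hQconn : ∀ a ∈ Q, ∀ b ∈ Q, ∃ n, Chain ↑Q a b n := by
    intro a ha b hb
    rw [hQf] at ha hb
    obtain ⟨a₀, ha₀, rfl⟩ := Finset.mem_image.1 ha
    obtain ⟨b₀, hb₀, rfl⟩ := Finset.mem_image.1 hb
    obtain ⟨n, hn⟩ := hPconn a₀ ha₀ b₀ hb₀
    exact ⟨n, hQcoe ▸ PolyAux.chain_fmap t r s hn⟩
  obtain ⟨c', hc'Q, hc'o, key, hcomp, hcorner2⟩ :=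
    main_Q Q hQsub h0Q hRconn hQconn hQcard
  obtain ⟨c, hcP, hFc⟩ := Finset.mem_image.1 (hQf ▸ hc'Q)
  have himg : (P.erase c).image F = Q.erase c' := by
    rw [Finset.image_erase hFinj, ← hQf, hFc]
  have hQecoe : (↑(Q.erase c') : Set (ℤ × ℤ)) = F '' ↑(P.erase c) := by
    rw [← himg, Finset.coe_image]
  have hoQe : ((0 : ℤ), (0 : ℤ)) ∈ Q.erase c' :=
    Finset.mem_erase.2 ⟨Ne.symm hc'o, h0Q⟩
  have hPene : (P.erase c).Nonempty := by
    have h1 : ((0 : ℤ), (0 : ℤ)) ∈ (P.erase c).image F := by rw [himg]; exact hoQe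
    obtain ⟨p, hp, _⟩ := Finset.mem_image.1 h1
    exact ⟨p, hp⟩
  -- membership transfer
  have hmemF : ∀ z : ℤ × ℤ, z ∈ P.erase c ↔ F z ∈ Q.erase c' := by
    intro z
    constructor
    · intro hz
      rw [← himg]
      exact Finset.mem_image_of_mem F hz
    · intro hz
      rw [← himg] at hz
      obtain ⟨p, hp, hpz⟩ := Finset.mem_image.1 hz
      rwa [← hFinj hpz]
  refine ⟨c, hcP, ⟨hPene, ?_⟩, ?_, ?_⟩
  · -- IsPolyomino (P.erase c)
    rw [show {z : ℤ × ℤ | z ∈ P.erase c} = (↑(P.erase c) : Set (ℤ × ℤ)) from rfl,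
      induce_connected_iff]
    refine ⟨hPene, fun a ha b hb => ?_⟩
    have hQea : F a ∈ Q.erase c' := (hmemF a).1 ha
    have hQeb : F b ∈ Q.erase c' := (hmemF b).1 hb
    obtain ⟨n1, hn1⟩ := key (F a) hQea
    obtain ⟨n2, hn2⟩ := key (F b) hQeb
    have hchain : Chain ↑(Q.erase c') (F a) (F b) (n1 + n2) := hn1.append hn2.symm
    rw [hQecoe] at hchain
    exact ⟨n1 + n2, PolyAux.chain_fmap_rev t r s hchain a b rfl rfl⟩
  · -- HoleFree (P.erase c)
    intro v hv
    have hcompl : {z : ℤ × ℤ | z ∉ Q.erase c'} = F '' {z : ℤ × ℤ | z ∉ P.erase c} := by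
      have h1 : {z : ℤ × ℤ | z ∉ P.erase c} = (↑(P.erase c) : Set (ℤ × ℤ))ᶜ := rfl
      have h2 : {z : ℤ × ℤ | z ∉ Q.erase c'} = (↑(Q.erase c') : Set (ℤ × ℤ))ᶜ := rfl
      rw [h1, h2, Set.image_compl_eq hFbij, hQecoe]
    have hFv : F v ∉ Q.erase c' := fun h => hv ((hmemF v).2 h)
    obtain ⟨n0, hn0⟩ := hcomp (F v) hFv
    -- the infinite family of endpoints
    set G := PolyAux.gmap t r s with hG
    have hGinj : Function.Injective G :=
      Function.LeftInverse.injective (PolyAux.fmap_gmap t r s)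
    refine Set.infinite_of_injective_forall_mem
      (f := fun k : ℕ => G ((-1 : ℤ), (k : ℤ) + 1)) ?_ ?_
    · intro i j hij
      have := hGinj hij
      simp only [Prod.mk.injEq] at this
      omega
    · intro k
      set uk : ℤ × ℤ := G ((-1 : ℤ), (k : ℤ) + 1) with huk
      have hFuk : F uk = ((-1 : ℤ), (k : ℤ) + 1) := PolyAux.fmap_gmap t r s _
      have hukP : uk ∉ P.erase c := by
        intro h
        have := (hmemF uk).1 h
        rw [hFuk] at this
        have := (hQsub (Finset.mem_of_mem_erase this)).1
        simp only at this
        omega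
      -- chain from F v to (-1, k+1) in the complement of Q.erase c'
      have hvertm : Chain {z : ℤ × ℤ | z ∉ Q.erase c'}
          ((-1 : ℤ), (1 : ℤ)) ((-1 : ℤ), (k : ℤ) + 1) k := by
        refine (chain_vert k).mono ?_
        intro z hz h
        exact hz (hQsub (Finset.mem_coe.2 (Finset.mem_of_mem_erase h)))
      have hchain : Chain {z : ℤ × ℤ | z ∉ Q.erase c'} (F v) ((-1 : ℤ), (k : ℤ) + 1)
          (n0 + k) := hn0.append hvertm
      rw [hcompl] at hchain
      have hPchain := PolyAux.chain_fmap_rev t r s hchain v uk rfl hFuk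
      exact ⟨hukP, (induce_reachable_iff hv hukP).2 ⟨n0 + k, hPchain⟩⟩
  · -- CornerCompatible (P.erase c)
    refine ⟨Q.erase c', ⟨t, r, s, himg.symm⟩, ?_, hoQe, hcorner2⟩
    intro z hz
    exact hQsub (Finset.mem_coe.2 (Finset.mem_of_mem_erase (Finset.mem_coe.1 hz)))
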